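/- Let μ̂, δ̂, χ̂, ĉ, a11, a12, a21, a22 be real numbers. Consider the 2×2 complex matrix A with rows (a11 − μ̂ − i·ĉ, a12 + χ̂) and (a21, a22 − δ̂). Set Δ2 = μ̂ + δ̂ − a11 − a22 and Δ4 = (ĉ² + Δ2²)(δ̂ − a22)(μ̂ − a11) − a21·Δ2²·(a12 + χ̂). If Δ4 < 0, then A has an eigenvalue λ ∈ ℂ (i.e., A·v = λ·v has a nonzero solution v ∈ ℂ²) with Re λ > 0. -/
import Mathlib

/-- Eigenvector construction for a 2×2 matrix from a root of the characteristic
polynomial. -/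
lemma eigvec_of_charpoly_root (b11 b12 b21 b22 lam : ℂ)
    (h : (b11 - lam) * (b22 - lam) - b12 * b21 = 0) :
    ∃ v : Fin 2 → ℂ, v ≠ 0 ∧
      (Matrix.mulVec !![b11, b12; b21, b22] v = lam • v) := by
  by_cases hv : b12 = 0 ∧ lam - b11 = 0
  · by_cases hv2 : b21 = 0 ∧ lam - b22 = 0
    · refine ⟨![1, 0], ?_, ?_⟩
      · intro h0
        have := congrFun h0 0
        simp at this
      · funext i
        fin_cases i <;>
          simp [Matrix.mulVec, dotProduct, Fin.sum_univ_two, hv.1, hv2.1] <;>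
          linear_combination - (hv.2)
    · refine ⟨![lam - b22, b21], ?_, ?_⟩
      · intro h0
        apply hv2
        constructor
        · have := congrFun h0 1; simpa using this
        · have := congrFun h0 0; simpa using this
      · funext i
        fin_cases i
        · simp [Matrix.mulVec, dotProduct, Fin.sum_univ_two]
          linear_combination -h
        · simp [Matrix.mulVec, dotProduct, Fin.sum_univ_two]
          ring
  · refine ⟨![b12, lam - b11], ?_, ?_⟩
    · intro h0
      apply hv
      constructor
      · have := congrFun h0 0; simpa using this
      · have := congrFun h0 1; simpa using this
    · funext i
      fin_cases i
      · simp [Matrix.mulVec, dotProduct, Fin.sum_univ_two]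
        ring
      · simp [Matrix.mulVec, dotProduct, Fin.sum_univ_two]
        linear_combination -h

set_option maxHeartbeats 1000000 in
/-- If Δ4 < 0, the 2×2 stability matrix has an eigenvalue with positive real part
(an unstable normal mode). -/
theorem stmt_2 (mu de ch c a11 a12 a21 a22 : ℝ)
    (hΔ4 : (c ^ 2 + (mu + de - a11 - a22) ^ 2) * ((de - a22) * (mu - a11))
              - a21 * (mu + de - a11 - a22) ^ 2 * (a12 + ch) < 0) :
    let A : Matrix (Fin 2) (Fin 2) ℂ :=
      !![(a11 : ℂ) - (mu : ℂ) - Complex.I * (c : ℂ), (a12 : ℂ) + (ch : ℂ);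
         (a21 : ℂ), (a22 : ℂ) - (de : ℂ)]
    ∃ (lam : ℂ) (v : Fin 2 → ℂ), v ≠ 0 ∧ A.mulVec v = lam • v ∧ 0 < lam.re := by
  intro A
  set T : ℂ := ((a11 : ℂ) - mu - Complex.I * c) + ((a22 : ℂ) - de) with hT
  set Dd : ℂ := ((a11 : ℂ) - mu - Complex.I * c) * ((a22 : ℂ) - de)
      - (a21 : ℂ) * ((a12 : ℂ) + ch) with hDd
  obtain ⟨s, hs⟩ : ∃ s : ℂ, s ^ 2 = T ^ 2 - 4 * Dd :=
    IsAlgClosed.exists_pow_nat_eq _ (by norm_num : 0 < 2)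
  obtain ⟨l1, l2, h1c, h2c⟩ : ∃ l1 l2 : ℂ, l1 + l2 = T ∧ l1 * l2 = Dd :=
    ⟨(T + s) / 2, (T - s) / 2, by ring, by linear_combination (-(1:ℂ)/4) * hs⟩
  -- real/imaginary parts of the symmetric function relations
  have e1 : l1.re + l2.re = (a11 - mu) + (a22 - de) := by
    have := congrArg Complex.re h1c
    simpa [hT, Complex.add_re, Complex.sub_re, Complex.mul_re] using this
  have e2 : l1.im + l2.im = -c := by
    have := congrArg Complex.im h1c
    simpa [hT, Complex.add_im, Complex.sub_im, Complex.mul_im] using this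
  have e3 : l1.re * l2.re - l1.im * l2.im
      = (a11 - mu) * (a22 - de) - a21 * (a12 + ch) := by
    have := congrArg Complex.re h2c
    simpa [hDd, Complex.mul_re, Complex.sub_re, Complex.sub_im, Complex.add_re,
      Complex.add_im, Complex.mul_im] using this
  have e4 : l1.re * l2.im + l1.im * l2.re = -(c * (a22 - de)) := by
    have := congrArg Complex.im h2c
    simpa [hDd, Complex.mul_re, Complex.sub_re, Complex.sub_im, Complex.add_re,
      Complex.add_im, Complex.mul_im] using this
  -- key identity : Δ4 = Re l1 * Re l2 * ((Re l1 + Re l2)^2 + (Im l1 - Im l2)^2)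
  have hid : l1.re * l2.re * ((l1.re + l2.re) ^ 2 + (l1.im - l2.im) ^ 2)
      = (c ^ 2 + (mu + de - a11 - a22) ^ 2) * ((de - a22) * (mu - a11))
          - a21 * (mu + de - a11 - a22) ^ 2 * (a12 + ch) := by
    linear_combination
      (((a11 - mu) * (a22 - de) - a21 * (a12 + ch)) * ((l1.re + l2.re) + ((a11 - mu) + (a22 - de)))
        + (-c) * (-(c * (a22 - de)))) * e1
      + ((l1.re + l2.re) * (-(c * (a22 - de)))) * e2
      + ((l1.re + l2.re) ^ 2) * e3
      + ((l1.re + l2.re) * (l1.im + l2.im)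
          - ((l1.re * l2.im + l1.im * l2.re) + (-(c * (a22 - de))))) * e4
  have hprod : l1.re * l2.re < 0 := by
    by_contra hcon
    push_neg at hcon
    have hS : (0:ℝ) ≤ (l1.re + l2.re) ^ 2 + (l1.im - l2.im) ^ 2 := by positivity
    have := mul_nonneg hcon hS
    rw [hid] at this
    linarith
  -- pick the eigenvalue with positive real part
  have hpick : ∃ lam : ℂ, (lam = l1 ∨ lam = l2) ∧ 0 < lam.re := by
    rcases lt_or_ge 0 l1.re with h | h
    · exact ⟨l1, Or.inl rfl, h⟩
    · refine ⟨l2, Or.inr rfl, ?_⟩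
      nlinarith
  obtain ⟨lam, hlam, hre⟩ := hpick
  have hroot : lam ^ 2 - T * lam + Dd = 0 := by
    rcases hlam with rfl | rfl
    · linear_combination lam * h1c - h2c
    · linear_combination lam * h1c - h2c
  have hchar : (((a11 : ℂ) - mu - Complex.I * c) - lam) * (((a22 : ℂ) - de) - lam)
      - ((a12 : ℂ) + ch) * (a21 : ℂ) = 0 := by
    rw [hT, hDd] at hroot
    linear_combination hroot
  obtain ⟨v, hv, hAv⟩ := eigvec_of_charpoly_root _ _ _ _ _ hchar
  exact ⟨lam, v, hv, hAv, hre⟩
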